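/- Let N ≥ 2 be an integer and c a real number. Define the sequence a_n = P_n^{(N-2,0)}(2c-1) / (N+n-1)_n for n ≥ 0 (so that a_0 = 1). Then for every integer p ≥ 0 one has ∑_{n=0}^{p} a_n · C(p,n) · 1/(N+2n)_{p-n} = c^p / p!. -/

import Mathlib

open Finset



/-- Pochhammer symbol `(a)_m = a (a+1) ⋯ (a+m-1)`. -/
noncomputable def poch (a : ℝ) (m : ℕ) : ℝ := ∏ i ∈ Finset.range m, (a + i)

/-- Jacobi polynomial with nonnegative integer parameters. -/
noncomputable def jacobiP (α β n : ℕ) (x : ℝ) : ℝ :=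
  ∑ m ∈ Finset.range (n + 1),
    (Nat.choose (n + α) (n - m) : ℝ) * (Nat.choose (n + β) m : ℝ) *
      ((x - 1) / 2) ^ m * ((x + 1) / 2) ^ (n - m)

lemma fact_ne (m : ℕ) : ((m.factorial : ℝ)) ≠ 0 := by
  exact_mod_cast m.factorial_ne_zero

lemma fact_succ (m : ℕ) : (((m+1).factorial : ℝ)) = (m+1) * (m.factorial : ℝ) := by
  rw [Nat.factorial_succ]; push_cast; ring

lemma poch_nat (b m : ℕ) : poch ((b : ℝ) + 1) m = ((b + m).factorial : ℝ) / (b.factorial : ℝ) := by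
  induction m with
  | zero => simp [poch, div_self (fact_ne b)]
  | succ m ih =>
      rw [poch, prod_range_succ, ← poch, ih, show b + (m+1) = (b+m) + 1 from rfl, fact_succ]
      field_simp
      push_cast
      ring

lemma neg_one_pow_congr' {a b : ℕ} (h : a % 2 = b % 2) : ((-1:ℝ))^a = (-1)^b := by
  rw [neg_one_pow_eq_pow_mod_two, h, ← neg_one_pow_eq_pow_mod_two]

lemma expand_pow (c : ℝ) {m n : ℕ} (h : m ≤ n) :
    (c - 1)^m * c^(n - m) =
      ∑ j ∈ Finset.range (n+1), (-1:ℝ)^n * (-1)^j * (Nat.choose m (n - j) : ℝ) * c^j := by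
  have h1 : (c - 1)^m * c^(n-m)
      = ∑ i ∈ range (m+1), c^i * (-1:ℝ)^(m-i) * (m.choose i : ℝ) * c^(n-m) := by
    rw [sub_eq_add_neg, add_pow, sum_mul]
  rw [h1]
  rw [range_eq_Ico, range_eq_Ico, ← sum_Ico_consecutive _ (Nat.zero_le (n-m)) (by omega : n - m ≤ n + 1)]
  have h2 : ∑ j ∈ Ico 0 (n-m), (-1:ℝ)^n * (-1)^j * (m.choose (n-j) : ℝ) * c^j = 0 := by
    apply sum_eq_zero; intro j hj
    rw [mem_Ico] at hj
    rw [Nat.choose_eq_zero_of_lt (by omega)]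
    simp
  rw [h2, zero_add, sum_Ico_eq_sum_range, sum_Ico_eq_sum_range, Nat.sub_zero,
    show n + 1 - (n-m) = m + 1 by omega]
  apply sum_congr rfl
  intro i hi
  rw [mem_range] at hi
  simp only [Nat.zero_add]
  have hi' : i ≤ m := by omega
  rw [show n - (n - m + i) = m - i by omega]
  have e2 : (-1:ℝ)^n * (-1)^(n - m + i) = (-1)^(m-i) := by
    rw [← pow_add]; exact neg_one_pow_congr' (by omega)
  rw [e2, show n - m + i = i + (n - m) by omega, pow_add, Nat.choose_symm hi']
  ring

lemma keyF (M n j : ℕ) (hj : j ≤ n) :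
    ∑ m ∈ range (n+1), (n+M).choose (n-m) * (n.choose m * m.choose (n-j))
      = n.choose j * (n+M+j).choose j := by
  rw [range_eq_Ico, ← sum_Ico_consecutive _ (Nat.zero_le (n-j)) (by omega : n - j ≤ n + 1)]
  have h1 : ∑ m ∈ Ico 0 (n-j), (n+M).choose (n-m) * (n.choose m * m.choose (n-j)) = 0 := by
    apply sum_eq_zero; intro m hm
    rw [mem_Ico] at hm
    rw [Nat.choose_eq_zero_of_lt (by omega : m < n - j)]
    simp
  rw [h1, zero_add, sum_Ico_eq_sum_range, show n + 1 - (n-j) = j + 1 by omega]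
  have h3 : ∀ u ∈ range (j+1),
      (n+M).choose (n - (n - j + u)) * (n.choose (n - j + u) * (n - j + u).choose (n-j))
        = n.choose j * ((n+M).choose (j-u) * j.choose u) := by
    intro u hu
    rw [mem_range] at hu
    have hu' : u ≤ j := by omega
    have hc := Nat.choose_mul (n := n) (Nat.le_add_right (n-j) u)
    rw [show n - (n-j) = j by omega, show n - j + u - (n-j) = u by omega,
      Nat.choose_symm hj] at hc
    rw [show n - (n - j + u) = j - u by omega, hc]
    ring
  rw [sum_congr rfl h3, ← mul_sum]
  congr 1
  have v := Nat.add_choose_eq (n+M) j j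
  rw [Finset.Nat.sum_antidiagonal_eq_sum_range_succ
    (fun a b => (n+M).choose a * j.choose b) j] at v
  rw [← Finset.sum_range_reflect (fun k => (n+M).choose k * j.choose (j-k)) (j+1)] at v
  rw [v]
  apply sum_congr rfl
  intro u hu
  rw [mem_range] at hu
  rw [show j + 1 - 1 - u = j - u by omega, show j - (j - u) = u by omega]

lemma jacobi_eq (M n : ℕ) (c : ℝ) :
    jacobiP M 0 n (2*c - 1) =
      ∑ j ∈ range (n+1),
        (-1:ℝ)^n * (-1)^j * (n.choose j : ℝ) * ((n+M+j).choose j : ℝ) * c^j := by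
  unfold jacobiP
  have step1 : ∀ m ∈ range (n+1),
      ((n+M).choose (n-m) : ℝ) * ((n+0).choose m : ℝ) * ((2*c-1-1)/2)^m * ((2*c-1+1)/2)^(n-m)
        = ∑ j ∈ range (n+1), ((n+M).choose (n-m) : ℝ) *
            ((n.choose m * m.choose (n-j) : ℕ) : ℝ) * ((-1:ℝ)^n * (-1)^j * c^j) := by
    intro m hm
    rw [mem_range] at hm
    have hm' : m ≤ n := by omega
    rw [show (2*c-1-1)/2 = c - 1 by ring, show (2*c-1+1)/2 = c by ring, Nat.add_zero,
      mul_assoc, expand_pow c hm', mul_sum]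
    apply sum_congr rfl; intro j _
    push_cast
    ring
  rw [sum_congr rfl step1, sum_comm]
  apply sum_congr rfl
  intro j hj
  rw [mem_range] at hj
  have hcast : ∑ m ∈ range (n+1), ((n+M).choose (n-m) : ℝ) *
        ((n.choose m * m.choose (n-j) : ℕ) : ℝ) * ((-1:ℝ)^n * (-1)^j * c^j)
      = ((∑ m ∈ range (n+1), (n+M).choose (n-m) * (n.choose m * m.choose (n-j)) : ℕ) : ℝ)
          * ((-1:ℝ)^n * (-1)^j * c^j) := by
    push_cast
    rw [sum_mul]
  rw [hcast, keyF M n j (by omega)]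
  push_cast
  ring

lemma keyI (r k b : ℕ) :
    (((r+1).choose (k+1) : ℝ)) * ((b:ℝ)+2*k+3)
      = (r.choose k : ℝ) * ((b:ℝ)+r+k+3) + (r.choose (k+1) : ℝ) * ((b:ℝ)+k+2) := by
  rcases le_or_gt k r with h | h
  · obtain ⟨s, rfl⟩ := Nat.exists_eq_add_of_le h
    have h2n := Nat.choose_succ_right_eq (k+s) k
    rw [Nat.add_sub_cancel_left] at h2n
    have h2 : ((k+s).choose (k+1) : ℝ) * ((k:ℝ)+1) = ((k+s).choose k : ℝ) * (s:ℝ) := by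
      exact_mod_cast h2n
    rw [Nat.choose_succ_succ (k+s) k]
    push_cast
    linear_combination h2
  · rw [Nat.choose_eq_zero_of_lt (by omega), Nat.choose_eq_zero_of_lt (by omega),
      Nat.choose_eq_zero_of_lt (by omega)]
    simp

noncomputable def vfun (b r : ℕ) : ℕ → ℝ
  | 0 => 0
  | (k+1) => (-1:ℝ)^(k+1) * (r.choose k : ℝ) * ((b+k+1).factorial : ℝ)
      / ((b+r+k+2).factorial : ℝ)

lemma keyT (b r : ℕ) :
    ∑ k ∈ range (r+2), (-1:ℝ)^k * ((r+1).choose k : ℝ) * ((b:ℝ)+2*k+1)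
        * ((b+k).factorial : ℝ) / ((b+r+k+2).factorial : ℝ) = 0 := by
  have step : ∀ k : ℕ, (-1:ℝ)^k * ((r+1).choose k : ℝ) * ((b:ℝ)+2*k+1)
        * ((b+k).factorial : ℝ) / ((b+r+k+2).factorial : ℝ)
      = vfun b r k - vfun b r (k+1) := by
    intro k
    match k with
    | 0 =>
        simp only [vfun]
        rw [show b + 0 + 1 = b + 1 from rfl, show b + r + 0 + 2 = b + r + 2 from rfl,
          fact_succ b]
        simp only [Nat.choose_zero_right]
        push_cast
        ring_nf
    | (k+1) =>
        simp only [vfun]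
        have F1 : ((b+r+(k+1)+2).factorial : ℝ)
            = ((b:ℝ)+r+k+3) * ((b+r+k+2).factorial : ℝ) := by
          rw [show b+r+(k+1)+2 = (b+r+k+2)+1 by ring, fact_succ]; push_cast; ring_nf
        have F2 : ((b+(k+1)+1).factorial : ℝ) = ((b:ℝ)+k+2) * ((b+k+1).factorial : ℝ) := by
          rw [show b+(k+1)+1 = (b+k+1)+1 by ring, fact_succ]; push_cast; ring_nf
        have F3 : ((b+(k+1)).factorial : ℝ) = ((b+k+1).factorial : ℝ) := by
          rw [show b+(k+1) = b+k+1 by ring]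
        rw [F1, F2, F3]
        have hI := keyI r k b
        have hne1 : ((b+r+k+2).factorial : ℝ) ≠ 0 := fact_ne _
        have hne2 : ((b:ℝ)+r+k+3) ≠ 0 := by positivity
        have hxD : ((b:ℝ)+r+k+3) * ((b+r+k+2).factorial : ℝ) ≠ 0 := mul_ne_zero hne2 hne1
        rw [div_sub_div _ _ hne1 hxD, div_eq_div_iff hxD (mul_ne_zero hne1 hxD)]
        push_cast
        linear_combination ((-1:ℝ)^(k+1) * ((b+k+1).factorial : ℝ)
          * ((b+r+k+2).factorial : ℝ)^2 * ((b:ℝ)+r+k+3)) * hI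
  rw [sum_congr rfl (fun k _ => step k), sum_range_sub' (vfun b r) (r+2)]
  simp [vfun, Nat.choose_succ_self]

noncomputable def gfun (M p : ℕ) (c : ℝ) (n j : ℕ) : ℝ :=
  (-1:ℝ)^n * (-1)^j * (n.choose j : ℝ) * ((n+M+j).choose j : ℝ) * (p.choose n : ℝ)
    * ((M+n).factorial : ℝ) * ((M+2*n+1 : ℕ) : ℝ) / ((M+n+p+1).factorial : ℝ) * c^j

/-- The sequence `a_n = P_n^{(N-2,0)}(2c-1) / (N+n-1)_n` solves the recursive system
`∑_{n=0}^p a_n C(p,n) / (N+2n)_{p-n} = c^p / p!`. -/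
theorem stmt_0 (N : ℕ) (hN : 2 ≤ N) (c : ℝ) (p : ℕ) :
    ∑ n ∈ Finset.range (p + 1),
      (jacobiP (N - 2) 0 n (2 * c - 1) / poch ((N : ℝ) + n - 1) n) *
        (Nat.choose p n : ℝ) * (1 / poch ((N : ℝ) + 2 * n) (p - n)) =
      c ^ p / (Nat.factorial p : ℝ) := by
  obtain ⟨M, rfl⟩ : ∃ M, N = M + 2 := ⟨N - 2, by omega⟩
  simp only [Nat.add_sub_cancel]
  have key : ∀ n ∈ range (p+1),
      (jacobiP M 0 n (2 * c - 1) / poch (((M+2 : ℕ) : ℝ) + n - 1) n) * (p.choose n : ℝ) *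
        (1 / poch (((M+2 : ℕ) : ℝ) + 2 * n) (p - n))
      = ∑ j ∈ range (p+1), gfun M p c n j := by
    intro n hn
    rw [mem_range] at hn
    have hn' : n ≤ p := by omega
    rw [show ((M+2 : ℕ) : ℝ) + n - 1 = ((M+n : ℕ) : ℝ) + 1 by push_cast; ring,
      show ((M+2 : ℕ) : ℝ) + 2 * n = ((M+2*n+1 : ℕ) : ℝ) + 1 by push_cast; ring,
      poch_nat, poch_nat, show M+n+n = M+2*n by ring,
      show M+2*n+1+(p-n) = M+n+p+1 by omega, jacobi_eq]
    rw [div_eq_mul_inv, sum_mul, sum_mul, sum_mul]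
    refine Eq.trans (sum_congr rfl ?_) (sum_subset (range_subset_range.mpr (by omega : n+1 ≤ p+1)) ?_)
    · intro j _
      unfold gfun
      have h1 : ((M+2*n+1).factorial : ℝ) = ((M+2*n+1 : ℕ) : ℝ) * ((M+2*n).factorial : ℝ) := by
        rw [Nat.factorial_succ]; push_cast; ring
      rw [h1]
      have n1 := fact_ne (M+2*n)
      have n2 := fact_ne (M+n)
      have n3 := fact_ne (M+n+p+1)
      have n4 : ((M+2*n+1 : ℕ) : ℝ) ≠ 0 := by positivity
      field_simp
    · intro j _ hj
      rw [mem_range] at hj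
      unfold gfun
      rw [Nat.choose_eq_zero_of_lt (by omega : n < j)]
      simp
  rw [sum_congr rfl key, sum_comm]
  rw [Finset.sum_eq_single_of_mem p (self_mem_range_succ p) ?jlt]
  case jlt =>
    intro j hj hjp
    rw [mem_range] at hj
    have hjp' : j < p := by omega
    obtain ⟨r, rfl⟩ : ∃ r, p = j + r + 1 := ⟨p - j - 1, by omega⟩
    rw [range_eq_Ico, ← sum_Ico_consecutive _ (Nat.zero_le j) (by omega : j ≤ j+r+1+1)]
    have h0 : ∑ n ∈ Ico 0 j, gfun M (j+r+1) c n j = 0 := by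
      apply sum_eq_zero; intro n hn
      rw [mem_Ico] at hn
      unfold gfun
      rw [Nat.choose_eq_zero_of_lt (by omega : n < j)]
      simp
    rw [h0, zero_add, sum_Ico_eq_sum_range, show j+r+1+1-j = r+2 by omega]
    have hstep : ∀ k ∈ range (r+2), gfun M (j+r+1) c (j+k) j
        = (((j+r+1).choose j : ℝ) / (j.factorial : ℝ) * c^j)
          * ((-1:ℝ)^k * ((r+1).choose k : ℝ) * (((M+2*j : ℕ) : ℝ)+2*k+1)
              * ((M+2*j+k).factorial : ℝ) / ((M+2*j+r+k+2).factorial : ℝ)) := by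
      intro k hk
      rw [mem_range] at hk
      unfold gfun
      have hs : (-1:ℝ)^(j+k) * (-1)^j = (-1)^k := by
        rw [← pow_add]; exact neg_one_pow_congr' (by omega)
      have hcm := Nat.choose_mul (n := j+r+1) (Nat.le_add_right j k)
      rw [show j+r+1-j = r+1 by omega, show j+k-j = k by omega] at hcm
      have hcmr : ((j+r+1).choose (j+k) : ℝ) * ((j+k).choose j : ℝ)
          = ((j+r+1).choose j : ℝ) * ((r+1).choose k : ℝ) := by exact_mod_cast hcm
      have hcf := Nat.choose_mul_factorial_mul_factorial (show j ≤ M+2*j+k by omega)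
      rw [show M+2*j+k-j = M+j+k by omega] at hcf
      have hcfr : ((M+2*j+k).choose j : ℝ) * (j.factorial : ℝ) * ((M+j+k).factorial : ℝ)
          = ((M+2*j+k).factorial : ℝ) := by exact_mod_cast hcf
      rw [show j+k+M+j = M+2*j+k by omega, show M+(j+k)+(j+r+1)+1 = M+2*j+r+k+2 by omega,
        show M+(j+k) = M+j+k by omega]
      rw [hs]
      have n1 := fact_ne (M+2*j+r+k+2)
      have n2 := fact_ne j
      have main : ((j+k).choose j : ℝ) * ((M+2*j+k).choose j : ℝ)
            * ((j+r+1).choose (j+k) : ℝ) * ((M+j+k).factorial : ℝ) * (j.factorial : ℝ)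
          = ((j+r+1).choose j : ℝ) * ((r+1).choose k : ℝ) * ((M+2*j+k).factorial : ℝ) := by
        linear_combination (((j+r+1).choose (j+k) : ℝ) * ((j+k).choose j : ℝ)) * hcfr
          + ((M+2*j+k).factorial : ℝ) * hcmr
      field_simp
      push_cast
      linear_combination (((M:ℝ)+2*j+2*k+1) * c^j) * main
    rw [sum_congr rfl hstep, ← mul_sum, keyT (M+2*j) r, mul_zero]
  -- j = p case
  rw [Finset.sum_eq_single_of_mem p (self_mem_range_succ p) ?nlt]
  case nlt =>
    intro n hn hnp
    rw [mem_range] at hn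
    unfold gfun
    rw [Nat.choose_eq_zero_of_lt (show n < p by omega)]
    simp
  unfold gfun
  have s1 : (-1:ℝ)^p * (-1)^p = 1 := by
    rw [← pow_add]; exact Even.neg_one_pow ⟨p, rfl⟩
  have hC := Nat.choose_mul_factorial_mul_factorial (show p ≤ M+2*p by omega)
  rw [show M+2*p-p = M+p by omega] at hC
  have hCr : ((M+2*p).choose p : ℝ) * (p.factorial : ℝ) * ((M+p).factorial : ℝ)
      = ((M+2*p).factorial : ℝ) := by exact_mod_cast hC
  rw [show p+M+p = M+2*p by omega, show M+p+p+1 = M+2*p+1 by omega,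
    Nat.choose_self, s1]
  have h2 : ((M+2*p+1).factorial : ℝ) = ((M+2*p+1 : ℕ) : ℝ) * ((M+2*p).factorial : ℝ) := by
    rw [Nat.factorial_succ]; push_cast; ring
  rw [h2]
  have n1 := fact_ne (M+2*p)
  have n2 := fact_ne p
  have n3 := fact_ne (M+p)
  have n4 : ((M+2*p+1 : ℕ) : ℝ) ≠ 0 := by positivity
  field_simp
  linear_combination (c^p) * hCr
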